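/- Let R be a commutative ring with unity, Γ an ordered abelian group, and Γ' a submonoid of Γ ∪ {∞}. Suppose Γ' is endowed with a topology such that (P1) addition Γ' × Γ' → Γ' is continuous, and (P2) for all γ, γ' ∈ Γ' with γ < γ' there exist open sets U, U' with γ ∈ U, γ' ∈ U', and u < u' for all u ∈ U, u' ∈ U'. Then the set of all valuations of R taking values in Γ' is a closed subset of the product space (Γ')^R. -/

import Mathlib

/-- A valuation on a commutative ring `R` with values in a submonoid `Γ'` of `Γ ∪ {∞}`. -/
def IsValuationOn {R : Type*} [CommRing R] {Γ : Type*} [AddCommGroup Γ] [LinearOrder Γ] [IsOrderedAddMonoid Γ]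
    (Γ' : AddSubmonoid (WithTop Γ)) (f : R → Γ') : Prop :=
  (∀ a b : R, (f (a * b) : WithTop Γ) = (f a : WithTop Γ) + (f b : WithTop Γ)) ∧
  (∀ a b : R, min (f a : WithTop Γ) (f b : WithTop Γ) ≤ (f (a + b) : WithTop Γ)) ∧
  (f 1 : WithTop Γ) = 0 ∧ (f 0 : WithTop Γ) = ⊤

theorem aux_coe_min {Γ : Type*} [AddCommGroup Γ] [LinearOrder Γ] [IsOrderedAddMonoid Γ]
    (Γ' : AddSubmonoid (WithTop Γ)) (x y : Γ') :
    ((min x y : Γ') : WithTop Γ) = min (x : WithTop Γ) (y : WithTop Γ) := by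
  rcases le_total x y with h | h
  · rw [min_eq_left h, min_eq_left (Subtype.coe_le_coe.mpr h)]
  · rw [min_eq_right h, min_eq_right (Subtype.coe_le_coe.mpr h)]

theorem stmt0 {R : Type*} [CommRing R] {Γ : Type*} [AddCommGroup Γ] [LinearOrder Γ] [IsOrderedAddMonoid Γ]
    (Γ' : AddSubmonoid (WithTop Γ)) [TopologicalSpace Γ']
    (hP1 : Continuous fun p : Γ' × Γ' => p.1 + p.2)
    (hP2 : ∀ γ γ' : Γ', γ < γ' → ∃ U U' : Set Γ', IsOpen U ∧ IsOpen U' ∧ γ ∈ U ∧ γ' ∈ U' ∧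
      ∀ u ∈ U, ∀ u' ∈ U', u < u') :
    IsClosed {f : R → Γ' | IsValuationOn Γ' f} := by
  haveI : ContinuousAdd Γ' := ⟨hP1⟩
  haveI : T2Space Γ' := by
    constructor
    intro x y hxy
    rcases hxy.lt_or_gt with h | h
    · obtain ⟨U, U', hU, hU', hxU, hyU', hlt⟩ := hP2 x y h
      exact ⟨U, U', hU, hU', hxU, hyU',
        Set.disjoint_left.mpr fun z hz hz' => absurd rfl (hlt z hz z hz').ne⟩
    · obtain ⟨U, U', hU, hU', hyU, hxU', hlt⟩ := hP2 y x h
      exact ⟨U', U, hU', hU, hxU', hyU,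
        Set.disjoint_left.mpr fun z hz hz' => absurd rfl (hlt z hz' z hz).ne'⟩
  haveI : OrderClosedTopology Γ' := by
    constructor
    rw [← isOpen_compl_iff]
    rw [isOpen_iff_forall_mem_open]
    rintro ⟨x, y⟩ hp
    simp only [Set.mem_compl_iff, Set.mem_setOf_eq, not_le] at hp
    obtain ⟨U, U', hU, hU', hyU, hxU', hlt⟩ := hP2 y x hp
    refine ⟨U' ×ˢ U, ?_, hU'.prod hU, ⟨hxU', hyU⟩⟩
    rintro ⟨a, b⟩ ⟨ha, hb⟩
    simp only [Set.mem_compl_iff, Set.mem_setOf_eq, not_le]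
    exact hlt b hb a ha
  have hset : {f : R → Γ' | IsValuationOn Γ' f} =
      (⋂ (a : R) (b : R), {f : R → Γ' | f (a * b) = f a + f b}) ∩
      ((⋂ (a : R) (b : R), {f : R → Γ' | min (f a) (f b) ≤ f (a + b)}) ∩
      ({f : R → Γ' | f 1 = 0} ∩ {f : R → Γ' | (f 0 : WithTop Γ) = ⊤})) := by
    ext f
    simp only [IsValuationOn, Set.mem_setOf_eq, Set.mem_inter_iff, Set.mem_iInter]
    constructor
    · rintro ⟨h1, h2, h3, h4⟩
      refine ⟨fun a b => ?_, ⟨fun a b => ?_, ⟨?_, h4⟩⟩⟩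
      · exact Subtype.ext (by rw [h1 a b]; rfl)
      · rw [← Subtype.coe_le_coe, aux_coe_min]; exact h2 a b
      · exact Subtype.ext (by rw [h3]; rfl)
    · rintro ⟨h1, h2, h3, h4⟩
      refine ⟨fun a b => ?_, fun a b => ?_, ?_, h4⟩
      · rw [h1 a b]; rfl
      · rw [← aux_coe_min]; exact Subtype.coe_le_coe.mpr (h2 a b)
      · rw [h3]; rfl
  rw [hset]
  refine IsClosed.inter ?_ (IsClosed.inter ?_ (IsClosed.inter ?_ ?_))
  · exact isClosed_iInter fun a => isClosed_iInter fun b =>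
      isClosed_eq (continuous_apply _) ((continuous_apply a).add (continuous_apply b))
  · exact isClosed_iInter fun a => isClosed_iInter fun b =>
      isClosed_le ((continuous_apply a).min (continuous_apply b)) (continuous_apply _)
  · exact isClosed_eq (continuous_apply 1) continuous_const
  · have hsub : IsClosed {x : Γ' | (x : WithTop Γ) = ⊤} := by
      have hss : Set.Subsingleton {x : Γ' | (x : WithTop Γ) = ⊤} :=
        fun a ha b hb => Subtype.ext (ha.trans hb.symm)
      exact hss.finite.isClosed
    exact hsub.preimage (continuous_apply (0 : R) : Continuous fun f : R → Γ' => f 0)
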